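/- With the matrices V⁰,V¹,V²,V³ and W = -γ¹γ²γ³ (having W₁₃ = W₂₄ = 1, W₃₁ = W₄₂ = -1, else 0) in the Weyl representation, for every future-directed timelike vector (w⁰,w¹,w²,w³) (i.e. w⁰ > 0, (w⁰)² > (w¹)²+(w²)²+(w³)²) there exist ψ₁, ψ₂ ∈ ℂ⁴ with ψₖ*Vᵃψₖ = wᵃ for a = 0,1,2,3 and k = 1,2, and |ψ₁* W ψ₂| = √((w⁰)² - (w¹)² - (w²)² - (w³)²). -/

import Mathlib

open Matrix Complex

set_option maxHeartbeats 1000000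

noncomputable def V0 : Matrix (Fin 4) (Fin 4) ℂ := 1

noncomputable def V1 : Matrix (Fin 4) (Fin 4) ℂ :=
  !![0,-1,0,0; -1,0,0,0; 0,0,0,1; 0,0,1,0]

noncomputable def V2 : Matrix (Fin 4) (Fin 4) ℂ :=
  !![0,Complex.I,0,0; -Complex.I,0,0,0; 0,0,0,-Complex.I; 0,0,Complex.I,0]

noncomputable def V3 : Matrix (Fin 4) (Fin 4) ℂ :=
  !![-1,0,0,0; 0,1,0,0; 0,0,1,0; 0,0,0,-1]

/-- `W = -γ¹γ²γ³` in the Weyl representation. -/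
noncomputable def Wmat : Matrix (Fin 4) (Fin 4) ℂ :=
  !![0,0,1,0; 0,0,0,1; -1,0,0,0; 0,-1,0,0]

lemma key_aux (w0 w1 w2 w3 α β1 β2 t : ℝ)
    (h0 : (1+t^2)*(α^2+β1^2+β2^2) = w0)
    (h1 : 2*(t^2-1)*(α*β1) = w1)
    (h2 : 2*(t^2-1)*(α*β2) = w2)
    (h3 : (t^2-1)*(α^2-β1^2-β2^2) = w3)
    (hW : 2*t*(α^2+β1^2+β2^2) = Real.sqrt (w0^2-w1^2-w2^2-w3^2)) :
    ∃ ψ₁ ψ₂ : Fin 4 → ℂ,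
      (star ψ₁ ⬝ᵥ V0.mulVec ψ₁ = (w0 : ℂ) ∧
       star ψ₁ ⬝ᵥ V1.mulVec ψ₁ = (w1 : ℂ) ∧
       star ψ₁ ⬝ᵥ V2.mulVec ψ₁ = (w2 : ℂ) ∧
       star ψ₁ ⬝ᵥ V3.mulVec ψ₁ = (w3 : ℂ)) ∧
      (star ψ₂ ⬝ᵥ V0.mulVec ψ₂ = (w0 : ℂ) ∧
       star ψ₂ ⬝ᵥ V1.mulVec ψ₂ = (w1 : ℂ) ∧
       star ψ₂ ⬝ᵥ V2.mulVec ψ₂ = (w2 : ℂ) ∧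
       star ψ₂ ⬝ᵥ V3.mulVec ψ₂ = (w3 : ℂ)) ∧
      ‖star ψ₁ ⬝ᵥ Wmat.mulVec ψ₂‖ =
        Real.sqrt (w0^2 - w1^2 - w2^2 - w3^2) := by
  set ψ : Fin 4 → ℂ := ![(α:ℂ), β1+β2*Complex.I, t*α*Complex.I,
    -(t*β2) + t*β1*Complex.I] with hψ
  have e0 : star ψ ⬝ᵥ V0.mulVec ψ = (w0 : ℂ) := by
    rw [← h0]
    simp [hψ, V0, Matrix.one_mulVec, dotProduct, Fin.sum_univ_four,
      Complex.ext_iff, ← Complex.ofReal_pow]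
    constructor <;> ring
  have e1 : star ψ ⬝ᵥ V1.mulVec ψ = (w1 : ℂ) := by
    rw [← h1]
    simp [hψ, V1, Matrix.mulVec, dotProduct, Fin.sum_univ_four, Matrix.cons_val_zero,
      Matrix.cons_val_one, Matrix.head_cons, Matrix.cons_val_two, Matrix.cons_val_three,
      Matrix.tail_cons, Matrix.head_fin_const, Matrix.vecHead, Matrix.vecTail,
      Complex.ext_iff, ← Complex.ofReal_pow]
    constructor <;> ring
  have e2 : star ψ ⬝ᵥ V2.mulVec ψ = (w2 : ℂ) := by
    rw [← h2]
    simp [hψ, V2, Matrix.mulVec, dotProduct, Fin.sum_univ_four, Matrix.cons_val_zero,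
      Matrix.cons_val_one, Matrix.head_cons, Matrix.cons_val_two, Matrix.cons_val_three,
      Matrix.tail_cons, Matrix.head_fin_const, Matrix.vecHead, Matrix.vecTail,
      Complex.ext_iff, ← Complex.ofReal_pow]
    constructor <;> ring
  have e3 : star ψ ⬝ᵥ V3.mulVec ψ = (w3 : ℂ) := by
    rw [← h3]
    simp [hψ, V3, Matrix.mulVec, dotProduct, Fin.sum_univ_four, Matrix.cons_val_zero,
      Matrix.cons_val_one, Matrix.head_cons, Matrix.cons_val_two, Matrix.cons_val_three,
      Matrix.tail_cons, Matrix.head_fin_const, Matrix.vecHead, Matrix.vecTail,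
      Complex.ext_iff, ← Complex.ofReal_pow]
    constructor <;> ring
  have eW : star ψ ⬝ᵥ Wmat.mulVec ψ =
      ((2*t*(α^2+β1^2+β2^2) : ℝ) : ℂ) * Complex.I := by
    simp [hψ, Wmat, Matrix.mulVec, dotProduct, Fin.sum_univ_four, Matrix.cons_val_zero,
      Matrix.cons_val_one, Matrix.head_cons, Matrix.cons_val_two, Matrix.cons_val_three,
      Matrix.tail_cons, Matrix.head_fin_const, Matrix.vecHead, Matrix.vecTail,
      Complex.ext_iff, ← Complex.ofReal_pow]
    constructor <;> ring
  refine ⟨ψ, ψ, ⟨e0, e1, e2, e3⟩, ⟨e0, e1, e2, e3⟩, ?_⟩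
  rw [eW, norm_mul, Complex.norm_I, mul_one, Complex.norm_real, Real.norm_eq_abs, hW,
    _root_.abs_of_nonneg (Real.sqrt_nonneg _)]

theorem stmt_8 (w0 w1 w2 w3 : ℝ) (hw0 : 0 < w0)
    (htimelike : w1^2 + w2^2 + w3^2 < w0^2) :
    ∃ ψ₁ ψ₂ : Fin 4 → ℂ,
      (star ψ₁ ⬝ᵥ V0.mulVec ψ₁ = (w0 : ℂ) ∧
       star ψ₁ ⬝ᵥ V1.mulVec ψ₁ = (w1 : ℂ) ∧
       star ψ₁ ⬝ᵥ V2.mulVec ψ₁ = (w2 : ℂ) ∧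
       star ψ₁ ⬝ᵥ V3.mulVec ψ₁ = (w3 : ℂ)) ∧
      (star ψ₂ ⬝ᵥ V0.mulVec ψ₂ = (w0 : ℂ) ∧
       star ψ₂ ⬝ᵥ V1.mulVec ψ₂ = (w1 : ℂ) ∧
       star ψ₂ ⬝ᵥ V2.mulVec ψ₂ = (w2 : ℂ) ∧
       star ψ₂ ⬝ᵥ V3.mulVec ψ₂ = (w3 : ℂ)) ∧
      ‖star ψ₁ ⬝ᵥ Wmat.mulVec ψ₂‖ =
        Real.sqrt (w0^2 - w1^2 - w2^2 - w3^2) := by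
  set r : ℝ := Real.sqrt (w1^2 + w2^2 + w3^2) with hrdef
  have hr0 : 0 ≤ r := Real.sqrt_nonneg _
  have hr2 : r^2 = w1^2 + w2^2 + w3^2 := Real.sq_sqrt (by positivity)
  have hrw0 : r < w0 := by nlinarith
  set t : ℝ := Real.sqrt ((w0+r)/(w0-r)) with htdef
  have ht0 : 0 ≤ t := Real.sqrt_nonneg _
  have ht2 : t^2 = (w0+r)/(w0-r) :=
    Real.sq_sqrt (div_nonneg (by linarith) (by linarith))
  have ht2' : t^2 * (w0-r) = w0+r := by
    rw [ht2, div_mul_cancel₀ _ (by linarith : w0 - r ≠ 0)]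
  set s : ℝ := (w0-r)/2 with hsdef
  have hs0 : 0 < s := by simp [hsdef]; linarith
  have hts : (t^2-1)*s = r := by rw [hsdef]; nlinarith
  have hts' : (1+t^2)*s = w0 := by rw [hsdef]; nlinarith
  have hm : w0^2 - w1^2 - w2^2 - w3^2 = (2*t*s)^2 := by nlinarith
  have hWs : 2*t*s = Real.sqrt (w0^2-w1^2-w2^2-w3^2) := by
    rw [hm, Real.sqrt_sq (by positivity)]
  rcases eq_or_lt_of_le hr0 with hr | hr
  · -- r = 0 : w1 = w2 = w3 = 0
    have hsum : w1^2 + w2^2 + w3^2 = 0 := by rw [← hr2, ← hr]; norm_num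
    have n1 := sq_nonneg w1; have n2 := sq_nonneg w2; have n3 := sq_nonneg w3
    have h1 : w1 = 0 := pow_eq_zero_iff two_ne_zero |>.mp (by linarith)
    have h2 : w2 = 0 := pow_eq_zero_iff two_ne_zero |>.mp (by linarith)
    have h3 : w3 = 0 := pow_eq_zero_iff two_ne_zero |>.mp (by linarith)
    have hα2 : (Real.sqrt (w0/2))^2 = w0/2 := Real.sq_sqrt (by linarith)
    refine key_aux w0 w1 w2 w3 (Real.sqrt (w0/2)) 0 0 1 (by rw [hα2]; ring)
      (by rw [h1]; ring) (by rw [h2]; ring) (by rw [h3]; ring) ?_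
    rw [hα2, h1, h2, h3]
    rw [show w0^2 - 0^2 - 0^2 - 0^2 = w0^2 by ring, Real.sqrt_sq hw0.le]
    ring
  · -- r > 0
    have hw3r : w3^2 ≤ r^2 := by nlinarith
    have hrw3 : 0 ≤ r + w3 := by nlinarith
    rcases eq_or_lt_of_le hrw3 with hc | hc
    · -- r + w3 = 0 : w3 = -r, w1 = w2 = 0
      have h3 : w3 = -r := by linarith
      have n1 := sq_nonneg w1; have n2 := sq_nonneg w2
      have h12 : w1^2 + w2^2 = 0 := by nlinarith
      have h1 : w1 = 0 := pow_eq_zero_iff two_ne_zero |>.mp (by linarith)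
      have h2 : w2 = 0 := pow_eq_zero_iff two_ne_zero |>.mp (by linarith)
      have hβ2 : (Real.sqrt s)^2 = s := Real.sq_sqrt hs0.le
      refine key_aux w0 w1 w2 w3 0 (Real.sqrt s) 0 t ?_ (by rw [h1]; ring)
        (by rw [h2]; ring) ?_ ?_
      · rw [show (0:ℝ)^2 + (Real.sqrt s)^2 + 0^2 = s by rw [hβ2]; ring, hts']
      · rw [show (0:ℝ)^2 - (Real.sqrt s)^2 - 0^2 = -s by rw [hβ2]; ring, h3]
        nlinarith
      · rw [← hWs, show (0:ℝ)^2 + (Real.sqrt s)^2 + 0^2 = s by rw [hβ2]; ring]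
    · -- r + w3 > 0
      have hrne : r ≠ 0 := ne_of_gt hr
      have hcne : r + w3 ≠ 0 := ne_of_gt hc
      set P : ℝ := s*(r+w3)/(2*r) with hPdef
      set Q : ℝ := s/(2*r*(r+w3)) with hQdef
      have hP0 : 0 ≤ P := by positivity
      have hQ0 : 0 ≤ Q := by positivity
      set α : ℝ := Real.sqrt P with hαdef
      set K : ℝ := Real.sqrt Q with hKdef
      have hα2 : α^2 = P := Real.sq_sqrt hP0
      have hK2 : K^2 = Q := Real.sq_sqrt hQ0
      have hαK : α*K = s/(2*r) := by
        rw [hαdef, hKdef, ← Real.sqrt_mul hP0,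
          show P*Q = (s/(2*r))^2 by rw [hPdef, hQdef]; field_simp,
          Real.sqrt_sq (by positivity)]
      have hw12 : w1^2 + w2^2 = r^2 - w3^2 := by linarith
      have hsum12 : (w1*K)^2 + (w2*K)^2 = (r^2-w3^2)*K^2 := by
        rw [mul_pow, mul_pow]; linear_combination K^2 * hw12
      have hS : α^2 + (w1*K)^2 + (w2*K)^2 = s := by
        rw [show α^2 + (w1*K)^2 + (w2*K)^2 = α^2 + ((w1*K)^2 + (w2*K)^2) by ring,
          hsum12, hα2, hK2, hPdef, hQdef]
        field_simp
        ring
      have hD : α^2 - (w1*K)^2 - (w2*K)^2 = s*w3/r := by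
        rw [show α^2 - (w1*K)^2 - (w2*K)^2 = α^2 - ((w1*K)^2 + (w2*K)^2) by ring,
          hsum12, hα2, hK2, hPdef, hQdef]
        field_simp
        ring
      refine key_aux w0 w1 w2 w3 α (w1*K) (w2*K) t ?_ ?_ ?_ ?_ ?_
      · rw [hS, hts']
      · rw [show α*(w1*K) = w1*(α*K) by ring, hαK]
        field_simp
        linear_combination w1*hts
      · rw [show α*(w2*K) = w2*(α*K) by ring, hαK]
        field_simp
        linear_combination w2*hts
      · rw [hD]
        field_simp
        linear_combination w3*hts
      · rw [hS, hWs]
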